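/- Let X be an arbitrary Coxeter graph, let w ∉ W_c(X), and let s ∈ S(X) be such that ws < w and ws ∉ W_c(X). Then for all x ∈ W_c(X) with x ≤ w, D_{x,w} = D̃_{x,w} + Σ_{y ∈ W_c(X), ys ∉ W_c(X), ys > y} D_{x,ys} D_{y,ws}, where D̃_{x,w} = D_{xs,ws} + (q−1) D_{x,ws} if xs < x; D̃_{x,w} = q D_{xs,ws} if x < xs and xs ∈ W_c(X); and D̃_{x,w} = 0 if x < xs and xs ∉ W_c(X). -/

import Mathlib

/-!
Common setup: Coxeter systems, Bruhat order, fully commutative elements,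
the Hecke algebra `H(X)`, the generalized Temperley--Lieb algebra `TL(X)`,
and the polynomial families `R`, `P` (Kazhdan--Lusztig), `D`, `a`, `L`.
-/

open LaurentPolynomial Polynomial

noncomputable section

namespace TLPaper

/-- The ring `A = ℤ[q^{1/2}, q^{-1/2}]`, modelled as Laurent polynomials over `ℤ`
in the variable `T = q^{1/2}`. -/
abbrev A : Type := LaurentPolynomial ℤ

/-- The element `q = (q^{1/2})^2` of `A`. -/
def q : A := LaurentPolynomial.T 2

variable {B : Type*} {W : Type*} [Group W] {M : CoxeterMatrix B} (cs : CoxeterSystem M W)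

/-- The Bruhat order on a Coxeter group: the reflexive-transitive closure of the relation
`x → xt` where `t` is a reflection and the length increases. -/
def bruhatLE : W → W → Prop :=
  Relation.ReflTransGen
    (fun x y => (∃ t : W, cs.IsReflection t ∧ y = x * t) ∧ cs.length x < cs.length y)

/-- Strict Bruhat order. -/
def bruhatLT (x w : W) : Prop := bruhatLE cs x w ∧ x ≠ w

/-- A single commutation move on words: interchanging two adjacent commuting letters
(i.e. letters `i`, `j` with `M i j = 2`). -/
def CommMove (M : CoxeterMatrix B) (l₁ l₂ : List B) : Prop :=
  ∃ (a b : List B) (i j : B), M i j = 2 ∧ l₁ = a ++ i :: j :: b ∧ l₂ = a ++ j :: i :: b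

/-- An element `w` is *fully commutative* if any reduced word for `w` can be obtained
from any other by a sequence of commutation moves. -/
def FullyCommutative (w : W) : Prop :=
  ∀ l₁ l₂ : List B, (cs.IsReduced l₁ ∧ cs.wordProd l₁ = w) →
    (cs.IsReduced l₂ ∧ cs.wordProd l₂ = w) →
    Relation.ReflTransGen (CommMove M) l₁ l₂

/-- All the data of the paper: the Hecke algebra `H` of the Coxeter system `cs` with its
standard basis `Tw`, the `R`-polynomials, the Kazhdan--Lusztig polynomials `P`,
the generalized Temperley--Lieb algebra `TL = H/J` (with `proj` the canonical projection),
the `D`-polynomials, the `a`-polynomials, and the IC basis `c` with its `L`-polynomials.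
The polynomial `L x w` is a polynomial in the variable `v = q^{-1/2}`;
all other polynomial families are polynomials in `q`. -/
structure TLContext {B : Type*} {W : Type*} [Group W] {M : CoxeterMatrix B}
    (cs : CoxeterSystem M W)
    (H : Type*) [Ring H] [Algebra A H] (TL : Type*) [Ring TL] [Algebra A TL] where
  /-- The standard basis `{T_w}` of the Hecke algebra. -/
  Tw : W → H
  Tw_indep : LinearIndependent A Tw
  Tw_span : Submodule.span A (Set.range Tw) = ⊤
  Tw_one : Tw 1 = 1
  /-- Multiplication rule, case `ℓ(ws) > ℓ(w)`. -/
  Tw_mul_simple_of_lt : ∀ (w : W) (i : B),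
    cs.length w < cs.length (w * cs.simple i) →
    Tw w * Tw (cs.simple i) = Tw (w * cs.simple i)
  /-- Multiplication rule, case `ℓ(ws) < ℓ(w)`. -/
  Tw_mul_simple_of_gt : ∀ (w : W) (i : B),
    cs.length (w * cs.simple i) < cs.length w →
    Tw w * Tw (cs.simple i) = q • Tw (w * cs.simple i) + (q - 1) • Tw w
  /-- `Tinv w` is the inverse of `T_w` in `H`. -/
  Tinv : W → H
  Tw_mul_Tinv : ∀ w : W, Tw w * Tinv w = 1
  Tinv_mul_Tw : ∀ w : W, Tinv w * Tw w = 1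
  /-- Bruhat lower sets are finite. -/
  finite_bruhatLE : ∀ w : W, {x | bruhatLE cs x w}.Finite
  /-- The `R`-polynomials. -/
  R : W → W → Polynomial ℤ
  R_self : ∀ w : W, R w w = 1
  R_eq_zero : ∀ x w : W, ¬ bruhatLE cs x w → R x w = 0
  /-- `T_{w⁻¹}⁻¹ = ε_w q^{-ℓ(w)} Σ_{x ≤ w} ε_x R_{x,w}(q) T_x`. -/
  Tinv_eq : ∀ w : W, Tinv w⁻¹ =
    ((-1 : A) ^ cs.length w * LaurentPolynomial.T (-2 * (cs.length w : ℤ))) •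
      ∑ᶠ x ∈ {x | bruhatLE cs x w},
        ((-1 : A) ^ cs.length x * Polynomial.aeval q (R x w)) • Tw x
  /-- The Kazhdan--Lusztig polynomials. -/
  P : W → W → Polynomial ℤ
  P_self : ∀ w : W, P w w = 1
  P_eq_zero : ∀ x w : W, ¬ bruhatLE cs x w → P x w = 0
  /-- `deg P_{x,w} ≤ (ℓ(w) - ℓ(x) - 1)/2` for `x < w`. -/
  P_degree : ∀ x w : W, bruhatLT cs x w →
    2 * (P x w).natDegree + 1 ≤ cs.length w - cs.length x
  /-- The involution `ι` of the Hecke algebra. -/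
  iotaH : H →+* H
  iotaH_involutive : ∀ h : H, iotaH (iotaH h) = h
  iotaH_Tw : ∀ w : W, iotaH (Tw w) = Tinv w⁻¹
  iotaH_smul : ∀ (a : A) (h : H),
    iotaH (a • h) = (LaurentPolynomial.invert (R := ℤ) a) • iotaH h
  /-- `ι` fixes the Kazhdan--Lusztig basis element
  `C'_w = q^{-ℓ(w)/2} Σ_{x ≤ w} P_{x,w}(q) T_x`. -/
  iotaH_KL : ∀ w : W,
    iotaH ((LaurentPolynomial.T (-(cs.length w : ℤ)) : A) •
      ∑ᶠ x ∈ {x | bruhatLE cs x w}, (Polynomial.aeval q (P x w)) • Tw x) =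
    (LaurentPolynomial.T (-(cs.length w : ℤ)) : A) •
      ∑ᶠ x ∈ {x | bruhatLE cs x w}, (Polynomial.aeval q (P x w)) • Tw x
  /-- The canonical projection `σ : H → TL = H/J`. -/
  proj : H →ₐ[A] TL
  proj_surjective : Function.Surjective proj
  /-- The kernel of `σ` is the two-sided ideal `J` generated by the elements
  `Σ_{w ∈ ⟨s_i, s_j⟩} T_w`, over all pairs of non-commuting generators `s_i, s_j`
  such that `s_i s_j` has finite order. -/
  proj_ker : ∀ h : H, proj h = 0 ↔ h ∈ Submodule.span A
    {x : H | ∃ (i j : B) (a b : H), M i j ≠ 0 ∧ M i j ≠ 1 ∧ M i j ≠ 2 ∧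
      x = a * (∑ᶠ u ∈ (Subgroup.closure {cs.simple i, cs.simple j} : Set W), Tw u) * b}
  /-- The images `t_w = σ(T_w)`, `w` fully commutative, are linearly independent. -/
  t_indep : LinearIndependent A
    (fun x : {w : W // FullyCommutative cs w} => proj (Tw x.1))
  /-- The `D`-polynomials. -/
  D : W → W → Polynomial ℤ
  /-- `t_w = Σ_{x ∈ W_c, x ≤ w} D_{x,w}(q) t_x`. -/
  D_eq : ∀ w : W, proj (Tw w) =
    ∑ᶠ x ∈ {x | FullyCommutative cs x ∧ bruhatLE cs x w},
      (Polynomial.aeval q (D x w)) • proj (Tw x)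
  D_self : ∀ w : W, FullyCommutative cs w → D w w = 1
  D_eq_zero : ∀ x w : W, ¬ (FullyCommutative cs x ∧ bruhatLE cs x w) → D x w = 0
  /-- The `a`-polynomials. -/
  apol : W → W → Polynomial ℤ
  /-- `(t_{w⁻¹})⁻¹ = q^{-ℓ(w)} Σ_{y ∈ W_c, y ≤ w} a_{y,w}(q) t_y` for `w ∈ W_c`. -/
  apol_eq : ∀ w : W, FullyCommutative cs w →
    proj (Tinv w⁻¹) = (LaurentPolynomial.T (-2 * (cs.length w : ℤ)) : A) •
      ∑ᶠ y ∈ {y | FullyCommutative cs y ∧ bruhatLE cs y w},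
        (Polynomial.aeval q (apol y w)) • proj (Tw y)
  apol_self : ∀ w : W, FullyCommutative cs w → apol w w = 1
  apol_eq_zero : ∀ y w : W,
    ¬ (FullyCommutative cs y ∧ FullyCommutative cs w ∧ bruhatLE cs y w) → apol y w = 0
  /-- The involution `ι` of the Temperley--Lieb algebra. -/
  iotaTL : TL →+* TL
  iotaTL_involutive : ∀ x : TL, iotaTL (iotaTL x) = x
  iotaTL_t : ∀ w : W, iotaTL (proj (Tw w)) = proj (Tinv w⁻¹)
  iotaTL_smul : ∀ (a : A) (x : TL),
    iotaTL (a • x) = (LaurentPolynomial.invert (R := ℤ) a) • iotaTL x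
  /-- The `L`-polynomials: `L x w` is a polynomial in the variable `v = q^{-1/2}`, and
  `L_{x,w}(q^{-1/2})` is obtained by evaluating it at `T (-1) = q^{-1/2}`. -/
  L : W → W → Polynomial ℤ
  /-- The IC basis `{c_w}` of `TL`. -/
  c : W → TL
  /-- `c_w = Σ_{x ∈ W_c, x ≤ w} q^{-ℓ(x)/2} L_{x,w}(q^{-1/2}) t_x`. -/
  c_eq : ∀ w : W, FullyCommutative cs w →
    c w = ∑ᶠ x ∈ {x | FullyCommutative cs x ∧ bruhatLE cs x w},
      ((LaurentPolynomial.T (-(cs.length x : ℤ)) : A) *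
        Polynomial.aeval (R := ℤ) ((LaurentPolynomial.T (-1) : A)) (L x w)) • proj (Tw x)
  /-- Convention: `c_x = 0` for `x ∉ W_c`. -/
  c_eq_zero : ∀ w : W, ¬ FullyCommutative cs w → c w = 0
  /-- The IC basis is `ι`-invariant. -/
  c_invariant : ∀ w : W, FullyCommutative cs w → iotaTL (c w) = c w
  L_self : ∀ w : W, L w w = 1
  L_eq_zero : ∀ x w : W,
    ¬ (FullyCommutative cs x ∧ FullyCommutative cs w ∧ bruhatLE cs x w) → L x w = 0
  /-- `L_{x,w}(q^{-1/2}) ∈ q^{-1/2} ℤ[q^{-1/2}]` for `x < w`. -/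
  L_coeff_zero : ∀ x w : W, bruhatLT cs x w → (L x w).coeff 0 = 0

namespace TLContext

variable {B : Type*} {W : Type*} [Group W] {M : CoxeterMatrix B} {cs : CoxeterSystem M W}
  {H : Type*} [Ring H] [Algebra A H] {TL : Type*} [Ring TL] [Algebra A TL]
  (Ctx : TLContext cs H TL)

/-- `μ(x,w)`: the coefficient of `q^{(ℓ(w)-ℓ(x)-1)/2}` in the Kazhdan--Lusztig
polynomial `P_{x,w}(q)` (which is zero unless `ℓ(w) - ℓ(x)` is odd). -/
def mu (x w : W) : ℤ :=
  if Odd (cs.length w - cs.length x) then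
    (Ctx.P x w).coeff ((cs.length w - cs.length x - 1) / 2)
  else 0

/-- The Kazhdan--Lusztig basis element `C'_w = q^{-ℓ(w)/2} Σ_{x ≤ w} P_{x,w}(q) T_x`. -/
def KL (w : W) : H :=
  (LaurentPolynomial.T (-(cs.length w : ℤ)) : A) •
    ∑ᶠ x ∈ {x | bruhatLE cs x w}, (Polynomial.aeval q (Ctx.P x w)) • Ctx.Tw x

/-- Condition (★): the projection sends the Kazhdan--Lusztig basis element `C'_w`
to `c_w` if `w ∈ W_c` and to `0` otherwise. -/
def Star : Prop :=
  (∀ w : W, FullyCommutative cs w → Ctx.proj (Ctx.KL w) = Ctx.c w) ∧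
  (∀ w : W, ¬ FullyCommutative cs w → Ctx.proj (Ctx.KL w) = 0)

/-- `L_{x,w}(q^{-1/2})` as an element of `A`. -/
def Lq (x w : W) : A := Polynomial.aeval (R := ℤ) ((LaurentPolynomial.T (-1) : A)) (Ctx.L x w)

/-- `L_{x,w}(q^{1/2})` as an element of `A`. -/
def Lq' (x w : W) : A := Polynomial.aeval (R := ℤ) ((LaurentPolynomial.T 1 : A)) (Ctx.L x w)

end TLContext


section HelperLemmas

variable {B : Type*} {W : Type*} [Group W] {M : CoxeterMatrix B} {cs : CoxeterSystem M W}

lemma commMove_wordProd' {l₁ l₂ : List B} (h : CommMove M l₁ l₂) :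
    cs.wordProd l₁ = cs.wordProd l₂ := by
  obtain ⟨a, b, i, j, hM, rfl, rfl⟩ := h
  have h2 : (cs.simple i * cs.simple j) * (cs.simple i * cs.simple j) = 1 := by
    have := cs.simple_mul_simple_pow i j
    rwa [hM, sq] at this
  have hcomm : cs.simple i * cs.simple j = cs.simple j * cs.simple i := by
    have := inv_eq_of_mul_eq_one_right h2
    rw [mul_inv_rev, cs.inv_simple, cs.inv_simple] at this
    exact this.symm
  simp only [cs.wordProd_append, cs.wordProd_cons]
  rw [← mul_assoc, ← mul_assoc, mul_assoc (cs.wordProd a), hcomm]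
  simp [mul_assoc]

lemma commMove_length' {l₁ l₂ : List B} (h : CommMove M l₁ l₂) :
    l₁.length = l₂.length := by
  obtain ⟨a, b, i, j, hM, rfl, rfl⟩ := h
  simp

lemma rtgCM_wordProd' {l₁ l₂ : List B} (h : Relation.ReflTransGen (CommMove M) l₁ l₂) :
    cs.wordProd l₁ = cs.wordProd l₂ ∧ l₁.length = l₂.length := by
  induction h with
  | refl => exact ⟨rfl, rfl⟩
  | tail _ hstep ih =>
      exact ⟨ih.1.trans (commMove_wordProd' hstep), ih.2.trans (commMove_length' hstep)⟩

lemma commMove_marked' {i : B} {pre suf l₂ : List B}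
    (h : CommMove M (pre ++ i :: suf) l₂) :
    ∃ pre' suf', l₂ = pre' ++ i :: suf' ∧
      Relation.ReflTransGen (CommMove M) (pre ++ suf) (pre' ++ suf') := by
  obtain ⟨a, b, x, y, hM, heq, rfl⟩ := h
  rcases List.append_eq_append_iff.mp heq with ⟨t, ha, hb⟩ | ⟨t, ha, hb⟩
  · subst ha
    cases t with
    | nil =>
        rw [List.nil_append] at hb
        injection hb with h1 h2
        subst h1; subst h2
        refine ⟨pre ++ [y], b, by simp, ?_⟩
        have he : (pre ++ [y]) ++ b = pre ++ y :: b := by simp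
        rw [he]
    | cons hd tl =>
        rw [List.cons_append] at hb
        injection hb with h1 h2
        subst h1; subst h2
        refine ⟨pre, tl ++ y :: x :: b, by simp, Relation.ReflTransGen.single ?_⟩
        exact ⟨pre ++ tl, b, x, y, hM, by simp, by simp⟩
  · subst ha
    cases t with
    | nil =>
        rw [List.nil_append] at hb
        injection hb with h1 h2
        subst h1; subst h2
        refine ⟨a ++ [y], b, by simp, ?_⟩
        have he : (a ++ [y]) ++ b = a ++ y :: b := by simp
        have he2 : (a ++ []) ++ y :: b = a ++ y :: b := by simp
        rw [he, he2]
    | cons x' t' =>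
        rw [List.cons_append] at hb
        injection hb with h1 h2
        subst h1
        cases t' with
        | nil =>
            rw [List.nil_append] at h2
            injection h2 with h3 h4
            subst h3; subst h4
            refine ⟨a, x :: b, by simp, ?_⟩
            have he : (a ++ [x]) ++ b = a ++ x :: b := by simp
            rw [he]
        | cons y' t'' =>
            rw [List.cons_append] at h2
            injection h2 with h3 h4
            subst h3; subst h4
            refine ⟨a ++ y :: x :: t'', suf, by simp, Relation.ReflTransGen.single ?_⟩
            exact ⟨a, t'' ++ suf, x, y, hM, by simp, by simp⟩

lemma rtg_marked' {i : B} {pre suf l₂ : List B}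
    (h : Relation.ReflTransGen (CommMove M) (pre ++ i :: suf) l₂) :
    ∃ pre' suf', l₂ = pre' ++ i :: suf' ∧
      Relation.ReflTransGen (CommMove M) (pre ++ suf) (pre' ++ suf') := by
  induction h with
  | refl => exact ⟨pre, suf, rfl, Relation.ReflTransGen.refl⟩
  | tail _ hstep ih =>
      obtain ⟨p', s', rfl, hchain⟩ := ih
      obtain ⟨p'', s'', rfl, hchain'⟩ := commMove_marked' hstep
      exact ⟨p'', s'', rfl, hchain.trans hchain'⟩

lemma fc_of_mul_simple {y : W} (hy : FullyCommutative cs y) {i : B}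
    (hlt : cs.length (y * cs.simple i) < cs.length y) :
    FullyCommutative cs (y * cs.simple i) := by
  intro l₁ l₂ h₁ h₂
  have hu : (y * cs.simple i) * cs.simple i = y := cs.simple_mul_simple_cancel_right i
  have hlen : cs.length (y * cs.simple i) + 1 = cs.length y :=
    (cs.length_mul_simple y i).resolve_left (by omega)
  have hred : ∀ l : List B, cs.IsReduced l → cs.wordProd l = y * cs.simple i →
      cs.IsReduced (l ++ [i]) ∧ cs.wordProd (l ++ [i]) = y := by
    intro l hl hp
    have hprod : cs.wordProd (l ++ [i]) = y := by
      rw [cs.wordProd_append, hp, cs.wordProd_singleton, hu]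
    refine ⟨?_, hprod⟩
    show cs.length (cs.wordProd (l ++ [i])) = (l ++ [i]).length
    rw [hprod, List.length_append, List.length_singleton, ← hl, hp]
    omega
  obtain ⟨hr₁, hp₁⟩ := hred l₁ h₁.1 h₁.2
  obtain ⟨hr₂, hp₂⟩ := hred l₂ h₂.1 h₂.2
  have hchain : Relation.ReflTransGen (CommMove M) (l₁ ++ [i]) (l₂ ++ [i]) :=
    hy (l₁ ++ [i]) (l₂ ++ [i]) ⟨hr₁, hp₁⟩ ⟨hr₂, hp₂⟩
  have hchain' : Relation.ReflTransGen (CommMove M) (l₁ ++ i :: []) (l₂ ++ [i]) := hchain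
  obtain ⟨pre', suf', heq, hc⟩ := rtg_marked' hchain'
  rw [List.append_nil] at hc
  rcases suf'.eq_nil_or_concat with rfl | ⟨s'', c, rfl⟩
  · have : l₂ = pre' := by
      have := List.append_inj' heq rfl
      exact this.1
    rw [this, ← List.append_nil pre']
    exact hc
  · exfalso
    have heq2 : l₂ ++ [i] = (pre' ++ i :: s'') ++ [c] := by simp [heq]
    have hci : i = c ∧ l₂ = pre' ++ i :: s'' := by
      have := List.append_inj' heq2 rfl
      refine ⟨by simpa using this.2, this.1⟩
    obtain ⟨hic, rfl⟩ := hci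
    subst hic
    have hm := rtgCM_wordProd' (cs := cs) hc
    have hmlen : l₁.length = pre'.length + s''.length + 1 := by
      have := hm.2; simp at this; omega
    have hm1 := hm.1
    simp only [List.concat_eq_append] at hm1
    have hmprod : cs.wordProd (pre' ++ (s'' ++ [i])) = y * cs.simple i :=
      hm1.symm.trans h₁.2
    have hprod2 : cs.wordProd (pre' ++ s'') = y := by
      have : cs.wordProd ((pre' ++ s'') ++ [i]) = y * cs.simple i := by
        simpa [List.append_assoc] using hmprod
      rw [cs.wordProd_append, cs.wordProd_singleton] at this
      have := congrArg (· * cs.simple i) this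
      simpa [mul_assoc, cs.simple_mul_simple_self] using this
    have hylen : cs.length y ≤ pre'.length + s''.length := by
      have := cs.length_wordProd_le (pre' ++ s'')
      rw [hprod2] at this; simpa using this
    have hl1 : l₁.length = cs.length (y * cs.simple i) := h₁.1 ▸ (h₁.2 ▸ rfl)
    omega

lemma aeval_q_injective :
    Function.Injective (Polynomial.aeval (R := ℤ) (A := A) q) := by
  have hψ : ∀ p : Polynomial ℤ, Polynomial.aeval (R := ℤ) (A := A) q p
      = Polynomial.toLaurent (p.comp (Polynomial.X ^ 2)) := by
    intro p
    have hhom : ((Polynomial.toLaurent (R := ℤ)).toIntAlgHom.comp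
        (Polynomial.aeval (Polynomial.X ^ 2 : Polynomial ℤ)) : Polynomial ℤ →ₐ[ℤ] A)
        = Polynomial.aeval (R := ℤ) (A := A) q := by
      apply Polynomial.algHom_ext
      simp [q, Polynomial.toLaurent_X_pow, RingHom.toIntAlgHom]
      exact (Polynomial.aeval_X _).symm
    have := DFunLike.congr_fun hhom p
    simp only [AlgHom.coe_comp, Function.comp_apply] at this
    refine this.symm.trans ?_
    exact congrArg Polynomial.toLaurent Polynomial.comp_eq_aeval.symm
  intro p1 p2 hpq
  rw [hψ, hψ] at hpq
  have h2 := Polynomial.toLaurent_injective hpq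
  have h3 : (p1 - p2).comp (Polynomial.X ^ 2) = 0 := by
    rw [Polynomial.sub_comp, h2, sub_self]
  rcases Polynomial.comp_eq_zero_iff.mp h3 with h | ⟨_, h⟩
  · exact sub_eq_zero.mp h
  · exfalso
    have hc : ((Polynomial.X : Polynomial ℤ) ^ 2).coeff 0 = 0 := by simp
    rw [hc, map_zero] at h
    exact pow_ne_zero 2 Polynomial.X_ne_zero h

end HelperLemmas

/-- Theorem (paper, Thm. `p-gc`): recursion for the `D`-polynomials, for an arbitrary
Coxeter graph `X`: if `w ∉ W_c`, `s ∈ S`, `ws < w`, `ws ∉ W_c`, then for all `x ∈ W_c`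
with `x ≤ w`, `D_{x,w} = D̃_{x,w} + Σ_{y ∈ W_c, ys ∉ W_c, ys > y} D_{x,ys} D_{y,ws}`,
where `D̃_{x,w} = D_{xs,ws} + (q-1) D_{x,ws}` if `xs < x`; `= q D_{xs,ws}` if
`x < xs ∈ W_c`; `= 0` if `x < xs ∉ W_c`. -/
theorem statement16 {B : Type*} {W : Type*} [Group W] {M : CoxeterMatrix B} {cs : CoxeterSystem M W}
    {H : Type*} [Ring H] [Algebra A H] {TL : Type*} [Ring TL] [Algebra A TL]
    (Ctx : TLContext cs H TL)
    (w : W) (hw : ¬ FullyCommutative cs w) (i : B)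
    (hws : cs.length (w * cs.simple i) < cs.length w)
    (hwsc : ¬ FullyCommutative cs (w * cs.simple i))
    (x : W) (hx : FullyCommutative cs x) (hxw : bruhatLE cs x w) :
    (cs.length (x * cs.simple i) < cs.length x →
      Ctx.D x w = Ctx.D (x * cs.simple i) (w * cs.simple i) +
        (Polynomial.X - 1) * Ctx.D x (w * cs.simple i) +
        ∑ᶠ y ∈ {y | FullyCommutative cs y ∧ ¬ FullyCommutative cs (y * cs.simple i) ∧
            cs.length y < cs.length (y * cs.simple i)},
          Ctx.D x (y * cs.simple i) * Ctx.D y (w * cs.simple i)) ∧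
    (cs.length x < cs.length (x * cs.simple i) →
      FullyCommutative cs (x * cs.simple i) →
      Ctx.D x w = Polynomial.X * Ctx.D (x * cs.simple i) (w * cs.simple i) +
        ∑ᶠ y ∈ {y | FullyCommutative cs y ∧ ¬ FullyCommutative cs (y * cs.simple i) ∧
            cs.length y < cs.length (y * cs.simple i)},
          Ctx.D x (y * cs.simple i) * Ctx.D y (w * cs.simple i)) ∧
    (cs.length x < cs.length (x * cs.simple i) →
      ¬ FullyCommutative cs (x * cs.simple i) →
      Ctx.D x w =
        ∑ᶠ y ∈ {y | FullyCommutative cs y ∧ ¬ FullyCommutative cs (y * cs.simple i) ∧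
            cs.length y < cs.length (y * cs.simple i)},
          Ctx.D x (y * cs.simple i) * Ctx.D y (w * cs.simple i)) := by
  classical
  have hss : ∀ z : W, z * cs.simple i * cs.simple i = z :=
    fun z => cs.simple_mul_simple_cancel_right i
  have hfin : ∀ z : W, {x' : W | FullyCommutative cs x' ∧ bruhatLE cs x' z}.Finite :=
    fun z => (Ctx.finite_bruhatLE z).subset fun _ hz => hz.2
  set F : W → Finset W := fun z => (hfin z).toFinset with hF
  have memF : ∀ (z x' : W), x' ∈ F z ↔ FullyCommutative cs x' ∧ bruhatLE cs x' z := by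
    intro z x'
    simp only [hF, Set.Finite.mem_toFinset, Set.mem_setOf_eq]
  set dA : W → W → A := fun a b => Polynomial.aeval (R := ℤ) (A := A) q (Ctx.D a b) with hdA
  set t : W → TL := fun z => Ctx.proj (Ctx.Tw z) with ht
  have hDz : ∀ z : W, t z = ∑ y ∈ F z, dA y z • t y := by
    intro z
    have h0 := Ctx.D_eq z
    rw [finsum_mem_eq_finite_toFinset_sum _ (hfin z)] at h0
    exact h0
  have hDzero : ∀ a b : W, a ∉ F b → dA a b = 0 := by
    intro a b hab
    have h0 : Ctx.D a b = 0 := Ctx.D_eq_zero a b (fun hc => hab ((memF b a).mpr hc))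
    simp only [hdA, h0, map_zero]
  set U : Finset W :=
    ((Ctx.finite_bruhatLE w).toFinset ∪ F (w * cs.simple i)
        ∪ (F (w * cs.simple i)).image (fun y => y * cs.simple i)
        ∪ (F (w * cs.simple i)).biUnion (fun y => F (y * cs.simple i))).filter
      (FullyCommutative cs) with hU
  have hUfc : ∀ z ∈ U, FullyCommutative cs z := fun z hz => (Finset.mem_filter.mp hz).2
  have hFwU : F w ⊆ U := by
    intro z hz
    rw [memF] at hz
    rw [hU, Finset.mem_filter]
    refine ⟨?_, hz.1⟩
    simp only [Finset.mem_union]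
    exact Or.inl (Or.inl (Or.inl ((Ctx.finite_bruhatLE w).mem_toFinset.mpr hz.2)))
  have hFwsU : F (w * cs.simple i) ⊆ U := by
    intro z hz
    rw [hU, Finset.mem_filter]
    exact ⟨by simp only [Finset.mem_union]; exact Or.inl (Or.inl (Or.inr hz)),
      ((memF _ _).mp hz).1⟩
  have hFysU : ∀ y ∈ F (w * cs.simple i), F (y * cs.simple i) ⊆ U := by
    intro y hy z hz
    rw [hU, Finset.mem_filter]
    refine ⟨?_, ((memF _ _).mp hz).1⟩
    simp only [Finset.mem_union]
    exact Or.inr (Finset.mem_biUnion.mpr ⟨y, hy, hz⟩)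
  have himgU : ∀ y ∈ F (w * cs.simple i), FullyCommutative cs (y * cs.simple i) →
      y * cs.simple i ∈ U := by
    intro y hy hfc
    rw [hU, Finset.mem_filter]
    refine ⟨?_, hfc⟩
    simp only [Finset.mem_union]
    exact Or.inl (Or.inr (Finset.mem_image.mpr ⟨y, hy, rfl⟩))
  set h : W → W → A := fun y x' =>
    if cs.length (y * cs.simple i) < cs.length y then
      (if x' = y * cs.simple i then q * dA y (w * cs.simple i) else 0)
      + (if x' = y then (q - 1) * dA y (w * cs.simple i) else 0)
    else if FullyCommutative cs (y * cs.simple i) then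
      (if x' = y * cs.simple i then dA y (w * cs.simple i) else 0)
    else dA x' (y * cs.simple i) * dA y (w * cs.simple i) with hh
  have hEqII : ∀ y ∈ F (w * cs.simple i),
      dA y (w * cs.simple i) • (t y * t (cs.simple i)) = ∑ x' ∈ U, h y x' • t x' := by
    intro y hy
    have hyfc : FullyCommutative cs y := ((memF _ _).mp hy).1
    rcases cs.length_mul_simple y i with hlen | hlen
    · -- ascent
      have hnlt : ¬ cs.length (y * cs.simple i) < cs.length y := by omega
      have hmul : t y * t (cs.simple i) = t (y * cs.simple i) := by
        simp only [ht]
        rw [← map_mul, Ctx.Tw_mul_simple_of_lt y i (by omega)]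
      by_cases hfc : FullyCommutative cs (y * cs.simple i)
      · have hmem : y * cs.simple i ∈ U := himgU y hy hfc
        have hrw : ∀ x' ∈ U, h y x' • t x'
            = (if x' = y * cs.simple i then dA y (w * cs.simple i) • t x' else 0) := by
          intro x' _
          simp only [hh]
          rw [if_neg hnlt, if_pos hfc, ite_smul, zero_smul]
        rw [Finset.sum_congr rfl hrw, Finset.sum_ite_eq' U (y * cs.simple i), if_pos hmem,
          hmul]
      · have hrw : ∀ x' ∈ U, h y x' • t x'
            = (dA x' (y * cs.simple i) * dA y (w * cs.simple i)) • t x' := by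
          intro x' _
          simp only [hh]
          rw [if_neg hnlt, if_neg hfc]
        rw [Finset.sum_congr rfl hrw, hmul, hDz (y * cs.simple i), Finset.smul_sum]
        rw [← Finset.sum_subset (hFysU y hy) (fun z _ hz => by
          rw [hDzero z (y * cs.simple i) hz, zero_mul, zero_smul])]
        refine Finset.sum_congr rfl fun z _ => ?_
        rw [smul_smul, mul_comm]
    · -- descent
      have hlt : cs.length (y * cs.simple i) < cs.length y := by omega
      have hfcys : FullyCommutative cs (y * cs.simple i) := fc_of_mul_simple hyfc hlt
      have hyU : y ∈ U := hFwsU hy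
      have hysU : y * cs.simple i ∈ U := himgU y hy hfcys
      have hmul : t y * t (cs.simple i)
          = q • t (y * cs.simple i) + (q - 1) • t y := by
        simp only [ht]
        rw [← map_mul, Ctx.Tw_mul_simple_of_gt y i hlt, map_add, map_smul, map_smul]
      have hrw : ∀ x' ∈ U, h y x' • t x'
          = (if x' = y * cs.simple i then (q * dA y (w * cs.simple i)) • t x' else 0)
          + (if x' = y then ((q - 1) * dA y (w * cs.simple i)) • t x' else 0) := by
        intro x' _
        simp only [hh]
        rw [if_pos hlt, add_smul, ite_smul, ite_smul, zero_smul]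
      rw [Finset.sum_congr rfl hrw, Finset.sum_add_distrib,
        Finset.sum_ite_eq' U (y * cs.simple i), Finset.sum_ite_eq' U y,
        if_pos hysU, if_pos hyU, hmul, smul_add, smul_smul, smul_smul,
        mul_comm (dA y (w * cs.simple i)) q, mul_comm (dA y (w * cs.simple i)) (q - 1)]
  have h1 : t w = ∑ y ∈ F (w * cs.simple i),
      dA y (w * cs.simple i) • (t y * t (cs.simple i)) := by
    have hltw : cs.length (w * cs.simple i)
        < cs.length ((w * cs.simple i) * cs.simple i) := by rw [hss]; exact hws
    have hmulw : Ctx.Tw (w * cs.simple i) * Ctx.Tw (cs.simple i) = Ctx.Tw w := by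
      rw [Ctx.Tw_mul_simple_of_lt (w * cs.simple i) i hltw, hss]
    calc t w = t (w * cs.simple i) * t (cs.simple i) := by
          simp only [ht]; rw [← map_mul, hmulw]
      _ = (∑ y ∈ F (w * cs.simple i), dA y (w * cs.simple i) • t y) * t (cs.simple i) := by
          rw [← hDz (w * cs.simple i)]
      _ = ∑ y ∈ F (w * cs.simple i), dA y (w * cs.simple i) • (t y * t (cs.simple i)) := by
          rw [Finset.sum_mul]
          exact Finset.sum_congr rfl fun y _ => smul_mul_assoc _ _ _
  have keyTL : t w = ∑ x' ∈ U, (∑ y ∈ F (w * cs.simple i), h y x') • t x' := by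
    rw [h1, Finset.sum_congr rfl hEqII, Finset.sum_comm]
    exact Finset.sum_congr rfl fun x' _ => (Finset.sum_smul).symm
  have keyTL2 : t w = ∑ x' ∈ U, dA x' w • t x' := by
    rw [hDz w]
    exact Finset.sum_subset hFwU fun z _ hz => by rw [hDzero z w hz, zero_smul]
  have hzero : ∑ x' ∈ U, (dA x' w - ∑ y ∈ F (w * cs.simple i), h y x') • t x' = 0 := by
    have hsplit : ∀ x' ∈ U, (dA x' w - ∑ y ∈ F (w * cs.simple i), h y x') • t x'
        = dA x' w • t x' - (∑ y ∈ F (w * cs.simple i), h y x') • t x' :=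
      fun x' _ => sub_smul _ _ _
    rw [Finset.sum_congr rfl hsplit, Finset.sum_sub_distrib, ← keyTL2, ← keyTL, sub_self]
  have hxU : x ∈ U := hFwU ((memF w x).mpr ⟨hx, hxw⟩)
  have master : dA x w = ∑ y ∈ F (w * cs.simple i), h y x := by
    have hli := linearIndependent_iff'.mp Ctx.t_indep
    have hsum : ∑ x' ∈ U.subtype (FullyCommutative cs),
        (dA x'.1 w - ∑ y ∈ F (w * cs.simple i), h y x'.1) • Ctx.proj (Ctx.Tw x'.1) = 0 := by
      rw [Finset.sum_subtype_of_mem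
        (fun z => (dA z w - ∑ y ∈ F (w * cs.simple i), h y z) • Ctx.proj (Ctx.Tw z)) hUfc]
      simp only [ht] at hzero
      exact hzero
    have := hli (U.subtype (FullyCommutative cs))
      (fun x' => dA x'.1 w - ∑ y ∈ F (w * cs.simple i), h y x'.1) hsum ⟨x, hx⟩
      (Finset.mem_subtype.mpr hxU)
    exact sub_eq_zero.mp this
  -- evaluate the coefficient sum at x
  have hxys : ∀ y : W, (x = y * cs.simple i) ↔ (y = x * cs.simple i) := by
    intro y
    constructor
    · rintro rfl; rw [hss]
    · rintro rfl; rw [hss]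
  have hsplit1 := Finset.sum_filter_add_sum_filter_not (F (w * cs.simple i))
    (fun y => cs.length (y * cs.simple i) < cs.length y) (fun y => h y x)
  have hsplit2 := Finset.sum_filter_add_sum_filter_not
    ((F (w * cs.simple i)).filter (fun y => ¬ cs.length (y * cs.simple i) < cs.length y))
    (fun y => FullyCommutative cs (y * cs.simple i)) (fun y => h y x)
  have hT1 : ∑ y ∈ (F (w * cs.simple i)).filter
        (fun y => cs.length (y * cs.simple i) < cs.length y), h y x
      = (if cs.length x < cs.length (x * cs.simple i)
           then q * dA (x * cs.simple i) (w * cs.simple i) else 0)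
      + (if cs.length (x * cs.simple i) < cs.length x
           then (q - 1) * dA x (w * cs.simple i) else 0) := by
    have hrw : ∀ y ∈ (F (w * cs.simple i)).filter
          (fun y => cs.length (y * cs.simple i) < cs.length y), h y x
        = (if y = x * cs.simple i then q * dA y (w * cs.simple i) else 0)
        + (if y = x then (q - 1) * dA y (w * cs.simple i) else 0) := by
      intro y hy
      have hc : cs.length (y * cs.simple i) < cs.length y := by
        simpa using (Finset.mem_filter.mp hy).2
      simp only [hh]
      rw [if_pos hc]
      congr 1
      · exact if_congr (hxys y) rfl rfl
      · exact if_congr eq_comm rfl rfl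
    rw [Finset.sum_congr rfl hrw, Finset.sum_add_distrib,
      Finset.sum_ite_eq' _ (x * cs.simple i), Finset.sum_ite_eq' _ x]
    congr 1
    · by_cases hm : x * cs.simple i ∈ (F (w * cs.simple i)).filter
          (fun y => cs.length (y * cs.simple i) < cs.length y)
      · rw [if_pos hm]
        have hl : cs.length x < cs.length (x * cs.simple i) := by
          have := (Finset.mem_filter.mp hm).2
          rwa [hss] at this
        rw [if_pos hl]
      · rw [if_neg hm]
        by_cases hl : cs.length x < cs.length (x * cs.simple i)
        · rw [if_pos hl]
          by_cases hmem : x * cs.simple i ∈ F (w * cs.simple i)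
          · exfalso
            apply hm
            refine Finset.mem_filter.mpr ⟨hmem, ?_⟩
            show cs.length (x * cs.simple i * cs.simple i) < cs.length (x * cs.simple i)
            rw [hss]
            exact hl
          · rw [hDzero _ _ hmem, mul_zero]
        · rw [if_neg hl]
    · by_cases hm : x ∈ (F (w * cs.simple i)).filter
          (fun y => cs.length (y * cs.simple i) < cs.length y)
      · rw [if_pos hm]
        have hl : cs.length (x * cs.simple i) < cs.length x := by
          simpa using (Finset.mem_filter.mp hm).2
        rw [if_pos hl]
      · rw [if_neg hm]
        by_cases hl : cs.length (x * cs.simple i) < cs.length x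
        · rw [if_pos hl]
          by_cases hmem : x ∈ F (w * cs.simple i)
          · exact absurd (Finset.mem_filter.mpr ⟨hmem, by simpa using hl⟩) hm
          · rw [hDzero _ _ hmem, mul_zero]
        · rw [if_neg hl]
  have hT2 : ∑ y ∈ ((F (w * cs.simple i)).filter
          (fun y => ¬ cs.length (y * cs.simple i) < cs.length y)).filter
        (fun y => FullyCommutative cs (y * cs.simple i)), h y x
      = (if cs.length (x * cs.simple i) < cs.length x
          then dA (x * cs.simple i) (w * cs.simple i) else 0) := by
    have hrw : ∀ y ∈ ((F (w * cs.simple i)).filter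
          (fun y => ¬ cs.length (y * cs.simple i) < cs.length y)).filter
        (fun y => FullyCommutative cs (y * cs.simple i)), h y x
        = (if y = x * cs.simple i then dA y (w * cs.simple i) else 0) := by
      intro y hy
      obtain ⟨hy1, hy2⟩ := Finset.mem_filter.mp hy
      have hnc : ¬ cs.length (y * cs.simple i) < cs.length y := by
        simpa using (Finset.mem_filter.mp hy1).2
      simp only [hh]
      rw [if_neg hnc, if_pos (by simpa using hy2)]
      exact if_congr (hxys y) rfl rfl
    rw [Finset.sum_congr rfl hrw, Finset.sum_ite_eq' _ (x * cs.simple i)]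
    by_cases hm : x * cs.simple i ∈ ((F (w * cs.simple i)).filter
          (fun y => ¬ cs.length (y * cs.simple i) < cs.length y)).filter
        (fun y => FullyCommutative cs (y * cs.simple i))
    · rw [if_pos hm]
      have hnc : ¬ cs.length (x * cs.simple i * cs.simple i) < cs.length (x * cs.simple i) := by
        simpa using (Finset.mem_filter.mp (Finset.mem_filter.mp hm).1).2
      rw [hss] at hnc
      have hl : cs.length (x * cs.simple i) < cs.length x := by
        rcases cs.length_mul_simple x i with h' | h' <;> omega
      rw [if_pos hl]
    · rw [if_neg hm]
      by_cases hl : cs.length (x * cs.simple i) < cs.length x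
      · rw [if_pos hl]
        by_cases hmem : x * cs.simple i ∈ F (w * cs.simple i)
        · exfalso
          apply hm
          refine Finset.mem_filter.mpr ⟨Finset.mem_filter.mpr ⟨hmem, ?_⟩, ?_⟩
          · show ¬ cs.length (x * cs.simple i * cs.simple i) < cs.length (x * cs.simple i)
            rw [hss]
            omega
          · show FullyCommutative cs (x * cs.simple i * cs.simple i)
            rw [hss]
            exact hx
        · rw [hDzero _ _ hmem]
      · rw [if_neg hl]
  have hT3 : ∑ y ∈ ((F (w * cs.simple i)).filter
          (fun y => ¬ cs.length (y * cs.simple i) < cs.length y)).filter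
        (fun y => ¬ FullyCommutative cs (y * cs.simple i)), h y x
      = ∑ y ∈ ((F (w * cs.simple i)).filter
          (fun y => ¬ cs.length (y * cs.simple i) < cs.length y)).filter
        (fun y => ¬ FullyCommutative cs (y * cs.simple i)),
        dA x (y * cs.simple i) * dA y (w * cs.simple i) := by
    refine Finset.sum_congr rfl fun y hy => ?_
    obtain ⟨hy1, hy2⟩ := Finset.mem_filter.mp hy
    have hnc : ¬ cs.length (y * cs.simple i) < cs.length y := by
      simpa using (Finset.mem_filter.mp hy1).2
    simp only [hh]
    rw [if_neg hnc, if_neg (by simpa using hy2)]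
  have hsum_eval : ∑ y ∈ F (w * cs.simple i), h y x
      = ((if cs.length x < cs.length (x * cs.simple i)
            then q * dA (x * cs.simple i) (w * cs.simple i) else 0)
        + (if cs.length (x * cs.simple i) < cs.length x
            then (q - 1) * dA x (w * cs.simple i) else 0))
      + ((if cs.length (x * cs.simple i) < cs.length x
            then dA (x * cs.simple i) (w * cs.simple i) else 0)
        + ∑ y ∈ ((F (w * cs.simple i)).filter
            (fun y => ¬ cs.length (y * cs.simple i) < cs.length y)).filter
          (fun y => ¬ FullyCommutative cs (y * cs.simple i)),
          dA x (y * cs.simple i) * dA y (w * cs.simple i)) := by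
    rw [← hsplit1, ← hsplit2, hT1, hT2, hT3]
  -- identification of the finsum in the statement
  have hDF : ∀ y : W, (y ∈ ((F (w * cs.simple i)).filter
          (fun y => ¬ cs.length (y * cs.simple i) < cs.length y)).filter
        (fun y => ¬ FullyCommutative cs (y * cs.simple i)))
      ↔ (y ∈ F (w * cs.simple i)
        ∧ cs.length y < cs.length (y * cs.simple i)
        ∧ ¬ FullyCommutative cs (y * cs.simple i)) := by
    intro y
    constructor
    · intro hy
      obtain ⟨hy1, hy2⟩ := Finset.mem_filter.mp hy
      obtain ⟨h0, h1⟩ := Finset.mem_filter.mp hy1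
      refine ⟨h0, ?_, by simpa using hy2⟩
      have h1' : ¬ cs.length (y * cs.simple i) < cs.length y := by simpa using h1
      rcases cs.length_mul_simple y i with h' | h' <;> omega
    · rintro ⟨h0, h1, h2⟩
      exact Finset.mem_filter.mpr ⟨Finset.mem_filter.mpr ⟨h0, by simpa using (by omega :
        ¬ cs.length (y * cs.simple i) < cs.length y)⟩, by simpa using h2⟩
  have hfin3 : (∑ᶠ y ∈ {y : W | FullyCommutative cs y
        ∧ ¬ FullyCommutative cs (y * cs.simple i)
        ∧ cs.length y < cs.length (y * cs.simple i)},
      Ctx.D x (y * cs.simple i) * Ctx.D y (w * cs.simple i))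
      = ∑ y ∈ ((F (w * cs.simple i)).filter
          (fun y => ¬ cs.length (y * cs.simple i) < cs.length y)).filter
        (fun y => ¬ FullyCommutative cs (y * cs.simple i)),
        Ctx.D x (y * cs.simple i) * Ctx.D y (w * cs.simple i) := by
    apply finsum_mem_eq_sum_of_subset
    · intro y hy
      obtain ⟨hys, hsup⟩ := hy
      have hD : Ctx.D y (w * cs.simple i) ≠ 0 :=
        right_ne_zero_of_mul (Function.mem_support.mp hsup)
      have hmem : y ∈ F (w * cs.simple i) := by
        rw [memF]
        by_contra hc
        exact hD (Ctx.D_eq_zero y (w * cs.simple i) hc)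
      exact (hDF y).mpr ⟨hmem, hys.2.2, hys.2.1⟩
    · intro y hy
      have h' := (hDF y).mp hy
      exact ⟨((memF _ _).mp h'.1).1, h'.2.2, h'.2.1⟩
  refine ⟨?_, ?_, ?_⟩
  · intro hdx
    have hfinal : dA x w = dA (x * cs.simple i) (w * cs.simple i)
        + (q - 1) * dA x (w * cs.simple i)
        + ∑ y ∈ ((F (w * cs.simple i)).filter
            (fun y => ¬ cs.length (y * cs.simple i) < cs.length y)).filter
          (fun y => ¬ FullyCommutative cs (y * cs.simple i)),
          dA x (y * cs.simple i) * dA y (w * cs.simple i) := by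
      rw [master, hsum_eval, if_neg (by omega), if_pos hdx, if_pos hdx]
      ring
    simp only [hdA] at hfinal
    apply aeval_q_injective
    rw [hfin3]
    simp only [map_add, map_mul, map_sub, map_one, map_sum, Polynomial.aeval_X]
    exact hfinal
  · intro hlt hfcxs
    have hfinal : dA x w = q * dA (x * cs.simple i) (w * cs.simple i)
        + ∑ y ∈ ((F (w * cs.simple i)).filter
            (fun y => ¬ cs.length (y * cs.simple i) < cs.length y)).filter
          (fun y => ¬ FullyCommutative cs (y * cs.simple i)),
          dA x (y * cs.simple i) * dA y (w * cs.simple i) := by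
      rw [master, hsum_eval, if_pos hlt, if_neg (by omega), if_neg (by omega)]
      ring
    simp only [hdA] at hfinal
    apply aeval_q_injective
    rw [hfin3]
    simp only [map_add, map_mul, map_sum, Polynomial.aeval_X]
    exact hfinal
  · intro hlt hnfc
    have hxsnm : x * cs.simple i ∉ F (w * cs.simple i) :=
      fun hc => hnfc ((memF _ _).mp hc).1
    have hfinal : dA x w = ∑ y ∈ ((F (w * cs.simple i)).filter
            (fun y => ¬ cs.length (y * cs.simple i) < cs.length y)).filter
          (fun y => ¬ FullyCommutative cs (y * cs.simple i)),
          dA x (y * cs.simple i) * dA y (w * cs.simple i) := by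
      rw [master, hsum_eval, if_pos hlt, if_neg (by omega), if_neg (by omega),
        hDzero _ _ hxsnm, mul_zero]
      ring
    simp only [hdA] at hfinal
    apply aeval_q_injective
    rw [hfin3]
    simp only [map_mul, map_sum]
    exact hfinal


end TLPaper
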